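/- The randomized serial dictatorship mechanism for two-sided matching is not ex ante stable: there exists a preference profile (with 3 workers and 3 firms) and a worker-firm pair (w,f) that are each other's top choices, yet under RSD the probability that w is matched to f is strictly less than 1, so (w,f) is an ex ante blocking pair. -/

import Mathlib

/- Preferences: strict orders over the other side plus the outside option ⊥ (`none`),
encoded by rank equivalences (higher rank = more preferred). -/
abbrev WPref (m : ℕ) := Option (Fin m) ≃ Fin (m + 1)
abbrev FPref (n : ℕ) := Option (Fin n) ≃ Fin (n + 1)

attribute [local instance] Classical.propDecidable

/-- State of serial dictatorship: the (partial) matching, from both sides. -/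
abbrev SDState (n m : ℕ) := (Fin n → Option (Fin m)) × (Fin m → Option (Fin n))

/-- Processing one agent in serial dictatorship: if the agent is not yet matched, it is
matched to its most preferred not-yet-matched acceptable partner on the other side
(or left unmatched if none is acceptable). -/
noncomputable def sdStep {n m : ℕ} (pw : Fin n → WPref m) (fp : Fin m → FPref n)
    (s : SDState n m) : (Fin n ⊕ Fin m) → SDState n m
  | Sum.inl w =>
    if s.1 w ≠ none then s
    else
      match (Finset.univ.filter fun f => s.2 f = none ∧ pw w (some f) > pw w none).toList.argmax
          (fun f => pw w (some f)) with
      | none => s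
      | some f => (Function.update s.1 w (some f), Function.update s.2 f (some w))
  | Sum.inr f =>
    if s.2 f ≠ none then s
    else
      match (Finset.univ.filter fun w => s.1 w = none ∧ fp f (some w) > fp f none).toList.argmax
          (fun w => fp f (some w)) with
      | none => s
      | some w => (Function.update s.1 w (some f), Function.update s.2 f (some w))

/-- Running serial dictatorship on a list of agents, starting from the empty matching. -/
noncomputable def sdRun {n m : ℕ} (pw : Fin n → WPref m) (fp : Fin m → FPref n)
    (L : List (Fin n ⊕ Fin m)) : SDState n m :=
  L.foldl (sdStep pw fp) (fun _ => none, fun _ => none)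

/-- The processing order induced by a permutation `π` of all agents. -/
noncomputable def sdOrder {n m : ℕ} (π : Equiv.Perm (Fin n ⊕ Fin m)) :
    List (Fin n ⊕ Fin m) :=
  (Finset.univ : Finset (Fin n ⊕ Fin m)).toList.map π

def myPref : Option (Fin 3) ≃ Fin 4 where
  toFun o := match o with
    | none => 0
    | some 0 => 1
    | some 1 => 3
    | some 2 => 2
  invFun i := match i with
    | 0 => none
    | 1 => some 0
    | 3 => some 1
    | 2 => some 2
  left_inv o := by fin_cases o <;> rfl
  right_inv i := by fin_cases i <;> rfl

lemma argmax_eq_of_strict {α : Type*} {f : α → Fin 4} {l : List α} {a : α}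
    (ha : a ∈ l) (h : ∀ b ∈ l, b ≠ a → f b < f a) : l.argmax f = some a := by
  rw [← Option.mem_def, List.mem_argmax_iff]
  refine ⟨ha, fun b hb => ?_, fun b hb hfb => ?_⟩
  · rcases eq_or_ne b a with rfl | hne
    · exact le_rfl
    · exact (h b hb hne).le
  · rcases eq_or_ne b a with rfl | hne
    · exact le_rfl
    · exact absurd hfb (not_le_of_gt (h b hb hne))

noncomputable abbrev mypw : Fin 3 → WPref 3 := fun _ => myPref
noncomputable abbrev myfp : Fin 3 → FPref 3 := fun _ => myPref

lemma step_preserve (s : SDState 3 3) (h1 : s.2 1 = some 0) (h2 : s.1 1 ≠ some 1)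
    (a : Fin 3 ⊕ Fin 3) :
    (sdStep mypw myfp s a).2 1 = some 0 ∧ (sdStep mypw myfp s a).1 1 ≠ some 1 := by
  cases a with
  | inl w =>
    rw [sdStep]
    split
    · exact ⟨h1, h2⟩
    · split
      · exact ⟨h1, h2⟩
      · next f hf =>
        have hfmem := List.argmax_mem hf
        rw [Finset.mem_toList, Finset.mem_filter] at hfmem
        have hfne : f ≠ 1 := by
          intro h; rw [h, h1] at hfmem; exact absurd hfmem.2.1 (by simp)
        constructor
        · rw [show ((Function.update s.1 w (some f), Function.update s.2 f (some w)) : SDState 3 3).2 = Function.update s.2 f (some w) from rfl,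
            Function.update_of_ne (Ne.symm hfne)]
          exact h1
        · rcases eq_or_ne w 1 with rfl | hw
          · rw [show ((Function.update s.1 1 (some f), Function.update s.2 f (some 1)) : SDState 3 3).1 = Function.update s.1 1 (some f) from rfl,
              Function.update_self]
            simpa using hfne
          · rw [show ((Function.update s.1 w (some f), Function.update s.2 f (some w)) : SDState 3 3).1 = Function.update s.1 w (some f) from rfl,
              Function.update_of_ne (Ne.symm hw)]
            exact h2
  | inr f =>
    rw [sdStep]
    split
    · exact ⟨h1, h2⟩
    · next hnone =>
      have hfne : f ≠ 1 := by
        intro h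
        rw [h, h1] at hnone
        simp at hnone
      split
      · exact ⟨h1, h2⟩
      · next w hw =>
        constructor
        · rw [show ((Function.update s.1 w (some f), Function.update s.2 f (some w)) : SDState 3 3).2 = Function.update s.2 f (some w) from rfl,
            Function.update_of_ne (Ne.symm hfne)]
          exact h1
        · rcases eq_or_ne w 1 with rfl | hwne
          · rw [show ((Function.update s.1 1 (some f), Function.update s.2 f (some 1)) : SDState 3 3).1 = Function.update s.1 1 (some f) from rfl,
              Function.update_self]
            simpa using hfne
          · rw [show ((Function.update s.1 w (some f), Function.update s.2 f (some w)) : SDState 3 3).1 = Function.update s.1 w (some f) from rfl,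
              Function.update_of_ne (Ne.symm hwne)]
            exact h2

lemma fold_preserve (L : List (Fin 3 ⊕ Fin 3)) :
    ∀ s : SDState 3 3, s.2 1 = some 0 → s.1 1 ≠ some 1 →
    (L.foldl (sdStep mypw myfp) s).2 1 = some 0 ∧
    (L.foldl (sdStep mypw myfp) s).1 1 ≠ some 1 := by
  induction L with
  | nil => exact fun s h1 h2 => ⟨h1, h2⟩
  | cons a L ih =>
    intro s h1 h2
    obtain ⟨h1', h2'⟩ := step_preserve s h1 h2 a
    exact ih _ h1' h2'

lemma first_step :
    sdStep mypw myfp (fun _ => none, fun _ => none) (Sum.inl 0) =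
      (Function.update (fun _ => none) 0 (some 1), Function.update (fun _ => none) 1 (some 0)) := by
  rw [sdStep]
  have hfilt : (Finset.univ.filter fun f : Fin 3 =>
      (fun _ : Fin 3 => (none : Option (Fin 3))) f = none ∧ myPref (some f) > myPref none) =
      Finset.univ := by
    apply Finset.filter_true_of_mem
    intro f _
    refine ⟨rfl, ?_⟩
    fin_cases f <;> decide
  have hmax : ((Finset.univ.filter fun f : Fin 3 =>
      (fun _ : Fin 3 => (none : Option (Fin 3))) f = none ∧ myPref (some f) > myPref none).toList.argmax
      (fun f => myPref (some f))) = some 1 := by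
    rw [hfilt]
    apply argmax_eq_of_strict
    · simp
    · intro b _ hb
      fin_cases b <;> simp_all <;> decide
  split
  · next h => exact absurd rfl h
  · split
    · next h => rw [hmax] at h; exact absurd h (by simp)
    · next f hf =>
      rw [hmax] at hf
      injection hf with hf
      subst hf
      rfl

/-- Randomized serial dictatorship is not ex ante stable: there is a 3-workers/3-firms
preference profile and a worker-firm pair `(w, f)` that are each other's top choices,
yet under RSD the probability (over the uniformly random priority order) that `w` is
matched to `f` is strictly less than 1; hence `(w, f)` is an ex ante blocking pair. -/
theorem rsd_not_ex_ante_stable :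
    ∃ (pw : Fin 3 → WPref 3) (fp : Fin 3 → FPref 3) (w : Fin 3) (f : Fin 3),
      (∀ x : Option (Fin 3), x ≠ some f → pw w (some f) > pw w x) ∧
      (∀ y : Option (Fin 3), y ≠ some w → fp f (some w) > fp f y) ∧
      Nat.card {π : Equiv.Perm (Fin 3 ⊕ Fin 3) //
          (sdRun pw fp (sdOrder π)).1 w = some f} <
        Nat.card (Equiv.Perm (Fin 3 ⊕ Fin 3)) := by
  refine ⟨mypw, myfp, 1, 1, ?_, ?_, ?_⟩
  · intro x hx; fin_cases x <;> simp_all <;> decide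
  · intro y hy; fin_cases y <;> simp_all <;> decide
  · set L0 := (Finset.univ : Finset (Fin 3 ⊕ Fin 3)).toList with hL0
    have hne : L0 ≠ [] := by
      simp only [hL0, ne_eq, Finset.toList_eq_nil]
      exact (Finset.univ_nonempty).ne_empty
    set a0 := L0.head hne with ha0
    set π : Equiv.Perm (Fin 3 ⊕ Fin 3) := Equiv.swap a0 (Sum.inl 0) with hπ
    have hkey : (sdRun mypw myfp (sdOrder π)).1 1 ≠ some 1 := by
      have hL : sdOrder π = (Sum.inl 0) :: L0.tail.map π := by
        rw [sdOrder, ← hL0]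
        conv_lhs => rw [← List.cons_head_tail hne]
        rw [List.map_cons]
        congr 1
        rw [hπ]
        exact Equiv.swap_apply_left a0 (Sum.inl 0)
      rw [sdRun, hL, List.foldl_cons, first_step]
      exact (fold_preserve _ _ (by simp) (by simp)).2
    rw [Nat.card_eq_fintype_card, Nat.card_eq_fintype_card]
    exact Fintype.card_subtype_lt hkey
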